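/- Let δ ∈ (0,1), c = δ, a > 1, α ∈ (0,1), and (ε_x)_{x≥0} ∈ {0,1}^ℕ with partial sums S_x = ∑_{k<x} ε_k satisfying S_x ≤ αx for all x. Consider the constant infinite Leslie matrix M with f_x = δ m(x), s_x = (1−δ) m(x), where m(x) = 1 + (a−1)ε_x, and let m_{0,n}(x) = (M^n 1)(x). Then m_{0,n}(0) ≤ (2 a^α)^n for all n ≥ 1. -/

import Mathlib

/-- `leslieMass f s k j x = m_{k,k+j}(x)` for infinite Leslie matrices
`M_k(x,0) = f k x`, `M_k(x,x+1) = s k x`. -/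
noncomputable def leslieMass (f s : ℕ → ℕ → ℝ) : ℕ → ℕ → ℕ → ℝ
  | _, 0, _ => 1
  | k, j + 1, x =>
      f k x * leslieMass f s (k + 1) j 0 + s k x * leslieMass f s (k + 1) j (x + 1)

/-- For the constant Leslie matrix with `f_x = δ m(x)`, `s_x = (1-δ) m(x)`,
`m(x) = 1 + (a-1) ε_x`, where the 0-1 sequence `ε` has partial sums
`S_x ≤ α x`, one has `m_{0,n}(0) = (Mⁿ 1)(0) ≤ (2 a^α)ⁿ`. -/
theorem leslie_counterexample_upper_bound
    (δ a α : ℝ) (hδ : δ ∈ Set.Ioo (0 : ℝ) 1) (ha : 1 < a)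
    (hα : α ∈ Set.Ioo (0 : ℝ) 1)
    (ε : ℕ → ℕ) (hε : ∀ x, ε x ≤ 1)
    (hS : ∀ x : ℕ, (∑ k ∈ Finset.range x, (ε k : ℝ)) ≤ α * x) :
    ∀ n : ℕ, 1 ≤ n →
      leslieMass (fun _ x => δ * (1 + (a - 1) * ε x))
          (fun _ x => (1 - δ) * (1 + (a - 1) * ε x)) 0 n 0
        ≤ (2 * a ^ α) ^ n := by
  obtain ⟨hδ0, hδ1⟩ := hδ
  have ha0 : (0 : ℝ) < a := lt_trans one_pos ha
  -- m(x) = a ^ ε x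
  have hm : ∀ x : ℕ, (1 + (a - 1) * ε x) = a ^ ((ε x : ℝ)) := by
    intro x
    rcases Nat.le_one_iff_eq_zero_or_eq_one.mp (hε x) with h | h <;>
      rw [h] <;> simp [Real.rpow_natCast]
  have key : ∀ j k x : ℕ,
      leslieMass (fun _ x => δ * (1 + (a - 1) * ε x))
          (fun _ x => (1 - δ) * (1 + (a - 1) * ε x)) k j x
        ≤ a ^ (α * ((x : ℝ) + j) - ∑ i ∈ Finset.range x, (ε i : ℝ)) := by
    intro j
    induction j with
    | zero =>
        intro k x
        have h1 : (0 : ℝ) ≤ α * ((x : ℝ) + 0) - ∑ i ∈ Finset.range x, (ε i : ℝ) := by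
          have := hS x; simp only [add_zero]; linarith
        have := Real.rpow_le_rpow_of_exponent_le ha.le h1
        rw [Real.rpow_zero] at this
        simpa [leslieMass] using this
    | succ j ih =>
        intro k x
        have hL0 := ih (k + 1) 0
        have hL1 := ih (k + 1) (x + 1)
        simp only [Nat.cast_zero, zero_add, Finset.range_zero, Finset.sum_empty,
          sub_zero] at hL0
        have hεx : (0 : ℝ) ≤ (ε x : ℝ) := Nat.cast_nonneg _
        have hmpos : (0 : ℝ) < 1 + (a - 1) * ε x := by nlinarith
        have hLpos0 : (0 : ℝ) < a ^ (α * ((j : ℝ))) := Real.rpow_pos_of_pos ha0 _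
        have hSx : (∑ i ∈ Finset.range (x + 1), (ε i : ℝ))
            = (∑ i ∈ Finset.range x, (ε i : ℝ)) + ε x := Finset.sum_range_succ _ _
        have hBound1 : δ * (1 + (a - 1) * ε x) *
            leslieMass (fun _ x => δ * (1 + (a - 1) * ε x))
              (fun _ x => (1 - δ) * (1 + (a - 1) * ε x)) (k + 1) j 0
            ≤ δ * a ^ (α * ((x : ℝ) + (j + 1)) - ∑ i ∈ Finset.range x, (ε i : ℝ)) := by
          have h1 : δ * (1 + (a - 1) * ε x) *
              leslieMass (fun _ x => δ * (1 + (a - 1) * ε x))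
                (fun _ x => (1 - δ) * (1 + (a - 1) * ε x)) (k + 1) j 0
              ≤ δ * (1 + (a - 1) * ε x) * a ^ (α * ((j : ℝ))) :=
            mul_le_mul_of_nonneg_left hL0 (by positivity)
          have h2 : δ * (1 + (a - 1) * ε x) * a ^ (α * ((j : ℝ)))
              = δ * a ^ ((ε x : ℝ) + α * ((j : ℝ))) := by
            rw [hm x, Real.rpow_add ha0]; ring
          have h3 : (ε x : ℝ) + α * ((j : ℝ))
              ≤ α * ((x : ℝ) + (j + 1)) - ∑ i ∈ Finset.range x, (ε i : ℝ) := by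
            have := hS (x + 1)
            rw [hSx] at this
            push_cast at this ⊢
            linarith
          have h4 := Real.rpow_le_rpow_of_exponent_le ha.le h3
          calc δ * (1 + (a - 1) * ε x) *
              leslieMass (fun _ x => δ * (1 + (a - 1) * ε x))
                (fun _ x => (1 - δ) * (1 + (a - 1) * ε x)) (k + 1) j 0
              ≤ δ * a ^ ((ε x : ℝ) + α * ((j : ℝ))) := by rw [← h2]; exact h1
            _ ≤ δ * a ^ (α * ((x : ℝ) + (j + 1)) - ∑ i ∈ Finset.range x, (ε i : ℝ)) :=
              mul_le_mul_of_nonneg_left h4 hδ0.le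
        have hBound2 : (1 - δ) * (1 + (a - 1) * ε x) *
            leslieMass (fun _ x => δ * (1 + (a - 1) * ε x))
              (fun _ x => (1 - δ) * (1 + (a - 1) * ε x)) (k + 1) j (x + 1)
            ≤ (1 - δ) * a ^ (α * ((x : ℝ) + (j + 1)) - ∑ i ∈ Finset.range x, (ε i : ℝ)) := by
          have h1 : (1 - δ) * (1 + (a - 1) * ε x) *
              leslieMass (fun _ x => δ * (1 + (a - 1) * ε x))
                (fun _ x => (1 - δ) * (1 + (a - 1) * ε x)) (k + 1) j (x + 1)
              ≤ (1 - δ) * (1 + (a - 1) * ε x) *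
                a ^ (α * (((x : ℕ) + 1 : ℕ) + (j : ℝ)) - ∑ i ∈ Finset.range (x + 1), (ε i : ℝ)) :=
            mul_le_mul_of_nonneg_left hL1 (by nlinarith)
          have h2 : (1 + (a - 1) * ε x) *
              a ^ (α * (((x : ℕ) + 1 : ℕ) + (j : ℝ)) - ∑ i ∈ Finset.range (x + 1), (ε i : ℝ))
              = a ^ (α * ((x : ℝ) + (j + 1)) - ∑ i ∈ Finset.range x, (ε i : ℝ)) := by
            rw [hm x, ← Real.rpow_add ha0, hSx]
            congr 1
            push_cast
            ring
          calc (1 - δ) * (1 + (a - 1) * ε x) *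
              leslieMass (fun _ x => δ * (1 + (a - 1) * ε x))
                (fun _ x => (1 - δ) * (1 + (a - 1) * ε x)) (k + 1) j (x + 1)
              ≤ (1 - δ) * ((1 + (a - 1) * ε x) *
                a ^ (α * (((x : ℕ) + 1 : ℕ) + (j : ℝ)) - ∑ i ∈ Finset.range (x + 1), (ε i : ℝ))) := by
                rw [← mul_assoc]; exact h1
            _ = (1 - δ) * a ^ (α * ((x : ℝ) + (j + 1)) - ∑ i ∈ Finset.range x, (ε i : ℝ)) := by
                rw [h2]
        show δ * (1 + (a - 1) * ε x) * _ + (1 - δ) * (1 + (a - 1) * ε x) * _ ≤ _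
        have hfinal := add_le_add hBound1 hBound2
        have : δ * a ^ (α * ((x : ℝ) + (j + 1)) - ∑ i ∈ Finset.range x, (ε i : ℝ))
            + (1 - δ) * a ^ (α * ((x : ℝ) + (j + 1)) - ∑ i ∈ Finset.range x, (ε i : ℝ))
            = a ^ (α * ((x : ℝ) + ((j : ℕ) + 1 : ℕ)) - ∑ i ∈ Finset.range x, (ε i : ℝ)) := by
          push_cast
          ring
        rw [this] at hfinal
        exact hfinal
  intro n hn
  have h0 := key n 0 0
  simp only [Nat.cast_zero, zero_add, Finset.range_zero, Finset.sum_empty, sub_zero] at h0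
  have h1 : a ^ (α * (n : ℝ)) = (a ^ α) ^ n := by
    rw [← Real.rpow_natCast (a ^ α) n, ← Real.rpow_mul ha0.le]
  have h2 : (a ^ α) ^ n ≤ (2 * a ^ α) ^ n := by
    apply pow_le_pow_left₀ (by positivity)
    nlinarith [Real.rpow_pos_of_pos ha0 α]
  calc leslieMass (fun _ x => δ * (1 + (a - 1) * ε x))
        (fun _ x => (1 - δ) * (1 + (a - 1) * ε x)) 0 n 0
      ≤ a ^ (α * (n : ℝ)) := h0
    _ = (a ^ α) ^ n := h1
    _ ≤ (2 * a ^ α) ^ n := h2
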